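/- Let X and Y be Banach spaces and let C be a convex set of continuous n-homogeneous polynomials from X to Y that is closed with respect to the polynomial norm ‖P‖ = sup{‖P(x)‖ : ‖x‖ ≤ 1}. If C is not sequentially closed under pointwise convergence, i.e. there exist a sequence (P_k)_k ⊆ C and a continuous n-homogeneous polynomial P : X → Y with P ∉ C such that ‖P_k(x) − P(x)‖ → 0 for every x ∈ X, then there exists a continuous n-homogeneous polynomial from X to Y that does not attain its norm. -/

import Mathlib

open Filter Topology

variable {𝕜 : Type*} [RCLike 𝕜] {n : ℕ} {X : Type*}
  [NormedAddCommGroup X] [NormedSpace 𝕜 X]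
  {Y : Type*} [NormedAddCommGroup Y] [NormedSpace 𝕜 Y]

/-- A continuous `n`-linear map on `Xⁿ` is symmetric; a continuous `n`-homogeneous polynomial
is (identified with) a symmetric continuous `n`-linear map `T`, via `P x = T (x, …, x)`. -/
def IsSymmML (T : ContinuousMultilinearMap 𝕜 (fun _ : Fin n => X) Y) : Prop :=
  ∀ (σ : Equiv.Perm (Fin n)) (x : Fin n → X), T (x ∘ σ) = T x

/-- The norm of the `n`-homogeneous polynomial associated to `T`. -/
noncomputable def polyNorm (T : ContinuousMultilinearMap 𝕜 (fun _ : Fin n => X) Y) : ℝ :=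
  sSup ((fun x => ‖T (fun _ => x)‖) '' Metric.closedBall (0 : X) 1)

/-- The polynomial associated to `T` attains its norm. -/
noncomputable def PolyNormAttaining
    (T : ContinuousMultilinearMap 𝕜 (fun _ : Fin n => X) Y) : Prop :=
  ∃ x : X, ‖x‖ ≤ 1 ∧ ‖T (fun _ => x)‖ = polyNorm T

namespace Stmt7Aux

attribute [local instance] Classical.propDecidable

local notation "CMM" => ContinuousMultilinearMap 𝕜 (fun _ : Fin n => X) Y

lemma diag_le_opNorm (T : CMM) {x : X} (hx : ‖x‖ ≤ 1) : ‖T (fun _ => x)‖ ≤ ‖T‖ := by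
  calc ‖T (fun _ => x)‖ ≤ ‖T‖ * ∏ _i : Fin n, ‖x‖ := T.le_opNorm _
  _ ≤ ‖T‖ * 1 := by
      apply mul_le_mul_of_nonneg_left _ (norm_nonneg T)
      exact Finset.prod_le_one (fun _ _ => norm_nonneg x) (fun _ _ => hx)
  _ = ‖T‖ := mul_one _

lemma polyset_nonempty (T : CMM) :
    ((fun x => ‖T (fun _ => x)‖) '' Metric.closedBall (0 : X) 1).Nonempty :=
  ⟨‖T (fun _ => (0:X))‖, ⟨0, by simp, rfl⟩⟩

lemma polyset_bdd (T : CMM) :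
    BddAbove ((fun x => ‖T (fun _ => x)‖) '' Metric.closedBall (0 : X) 1) := by
  refine ⟨‖T‖, ?_⟩
  rintro r ⟨x, hx, rfl⟩
  exact diag_le_opNorm T (by simpa [mem_closedBall_zero_iff] using hx)

lemma le_polyNorm (T : CMM) {x : X} (hx : ‖x‖ ≤ 1) : ‖T (fun _ => x)‖ ≤ polyNorm T :=
  le_csSup (polyset_bdd T) ⟨x, by simpa [mem_closedBall_zero_iff] using hx, rfl⟩

lemma polyNorm_le (T : CMM) {c : ℝ} (h : ∀ x : X, ‖x‖ ≤ 1 → ‖T (fun _ => x)‖ ≤ c) :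
    polyNorm T ≤ c := by
  apply csSup_le (polyset_nonempty T)
  rintro r ⟨x, hx, rfl⟩
  exact h x (by simpa [mem_closedBall_zero_iff] using hx)

lemma polyNorm_nonneg (T : CMM) : 0 ≤ polyNorm T :=
  le_trans (norm_nonneg _) (le_polyNorm T (x := 0) (by simp))

lemma polyNorm_le_opNorm (T : CMM) : polyNorm T ≤ ‖T‖ :=
  polyNorm_le T (fun _ hx => diag_le_opNorm T hx)

lemma polyNorm_add_le (T S : CMM) : polyNorm (T + S) ≤ polyNorm T + polyNorm S := by
  apply polyNorm_le
  intro x hx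
  calc ‖(T + S) (fun _ => x)‖ = ‖T (fun _ => x) + S (fun _ => x)‖ := by
        rw [ContinuousMultilinearMap.add_apply]
  _ ≤ ‖T (fun _ => x)‖ + ‖S (fun _ => x)‖ := norm_add_le _ _
  _ ≤ polyNorm T + polyNorm S := add_le_add (le_polyNorm T hx) (le_polyNorm S hx)

lemma polyNorm_smul_le (T : CMM) (r : ℝ) (hr : 0 ≤ r) :
    polyNorm ((r : 𝕜) • T) ≤ r * polyNorm T := by
  apply polyNorm_le
  intro x hx
  rw [ContinuousMultilinearMap.smul_apply, norm_smul, RCLike.norm_ofReal, abs_of_nonneg hr]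
  exact mul_le_mul_of_nonneg_left (le_polyNorm T hx) hr

lemma polyNorm_zero : polyNorm (0 : CMM) = 0 :=
  le_antisymm (polyNorm_le _ (fun x _ => by simp)) (polyNorm_nonneg _)

lemma polyNorm_le_add_dist (A B : CMM) : polyNorm A ≤ polyNorm B + ‖A - B‖ := by
  have h : A = B + (A - B) := by abel
  calc polyNorm A = polyNorm (B + (A - B)) := by rw [← h]
  _ ≤ polyNorm B + polyNorm (A - B) := polyNorm_add_le _ _
  _ ≤ polyNorm B + ‖A - B‖ := by
      have := polyNorm_le_opNorm (A - B); linarith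

lemma convexC (C : Set CMM)
    (hconvex : ∀ T ∈ C, ∀ S ∈ C, ∀ t : ℝ, 0 ≤ t → t ≤ 1 →
      ((t : 𝕜) • T + ((1 - t : ℝ) : 𝕜) • S) ∈ C) :
    ∀ (s : Finset ℕ) (w : ℕ → ℝ) (Q : ℕ → CMM), (∀ j ∈ s, 0 ≤ w j) →
      (∑ j ∈ s, w j = 1) → (∀ j ∈ s, Q j ∈ C) → (∑ j ∈ s, (w j : 𝕜) • Q j) ∈ C := by
  intro s
  induction s using Finset.cons_induction_on with
  | empty => intro w Q _ hsum _; simp at hsum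
  | cons a s ha IH =>
    intro w Q hw hsum hQ
    rw [Finset.sum_cons] at hsum ⊢
    by_cases hm : ∑ j ∈ s, w j = 0
    · have hall : ∀ j ∈ s, w j = 0 := by
        intro j hj
        exact (Finset.sum_eq_zero_iff_of_nonneg (fun i hi => hw i (Finset.mem_cons_of_mem hi))).1
          hm j hj
      have hz : ∑ j ∈ s, (w j : 𝕜) • Q j = 0 := by
        apply Finset.sum_eq_zero
        intro j hj; rw [hall j hj]; simp
      have hwa : w a = 1 := by rw [hm] at hsum; linarith
      rw [hz, hwa]
      simpa using hQ a (Finset.mem_cons_self a s)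
    · have hmpos : 0 < ∑ j ∈ s, w j :=
        lt_of_le_of_ne (Finset.sum_nonneg (fun i hi => hw i (Finset.mem_cons_of_mem hi)))
          (Ne.symm hm)
      set m := ∑ j ∈ s, w j with hmdef
      have hwa0 : 0 ≤ w a := hw a (Finset.mem_cons_self a s)
      have hwa1 : w a ≤ 1 := by nlinarith
      have hS' : (∑ j ∈ s, ((w j / m : ℝ) : 𝕜) • Q j) ∈ C := by
        apply IH (fun j => w j / m) Q
        · intro j hj; exact div_nonneg (hw j (Finset.mem_cons_of_mem hj)) (le_of_lt hmpos)
        · rw [← Finset.sum_div]; field_simp; exact hmdef.symm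
        · intro j hj; exact hQ j (Finset.mem_cons_of_mem hj)
      have := hconvex (Q a) (hQ a (Finset.mem_cons_self a s)) _ hS' (w a) hwa0 hwa1
      have he : ((1 - w a : ℝ) : 𝕜) • (∑ j ∈ s, ((w j / m : ℝ) : 𝕜) • Q j)
          = ∑ j ∈ s, (w j : 𝕜) • Q j := by
        rw [Finset.smul_sum]
        apply Finset.sum_congr rfl
        intro j hj
        rw [smul_smul, ← RCLike.ofReal_mul]
        congr 2
        have h1m : 1 - w a = m := by linarith
        rw [h1m]; field_simp
      rw [he] at this
      exact this

lemma coeff_eval (r : Fin n → Fin n) :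
    (∑ s : Finset (Fin n), (-1:𝕜)^s.card *
      ∏ i : Fin n, (if r i ∈ s then (-1:𝕜) else 1))
    = ∏ j : Fin n, ((-1:𝕜) * (-1)^(Finset.univ.filter (fun i => r i = j)).card + 1) := by
  classical
  have key : ∀ s : Finset (Fin n),
      (-1:𝕜)^s.card * ∏ i : Fin n, (if r i ∈ s then (-1:𝕜) else 1)
      = ∏ j ∈ s, ((-1:𝕜) * (-1)^(Finset.univ.filter (fun i => r i = j)).card) := by
    intro s
    have h1 : (-1:𝕜)^s.card = ∏ _j ∈ s, (-1:𝕜) := by rw [Finset.prod_const]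
    have h2 : (∏ i : Fin n, (if r i ∈ s then (-1:𝕜) else 1))
        = ∏ j ∈ s, (-1:𝕜)^(Finset.univ.filter (fun i => r i = j)).card := by
      have hf : (∏ i : Fin n, (if r i ∈ s then (-1:𝕜) else 1))
          = ∏ j : Fin n, ∏ i ∈ Finset.univ.filter (fun i => r i = j),
              (if r i ∈ s then (-1:𝕜) else 1) := by
        rw [Finset.prod_fiberwise Finset.univ r (fun i => (if r i ∈ s then (-1:𝕜) else 1))]
      rw [hf]
      have hg : ∀ j : Fin n, (∏ i ∈ Finset.univ.filter (fun i => r i = j),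
          (if r i ∈ s then (-1:𝕜) else 1))
          = (if j ∈ s then (-1:𝕜) else 1)^(Finset.univ.filter (fun i => r i = j)).card := by
        intro j
        rw [← Finset.prod_const]
        apply Finset.prod_congr rfl
        intro i hi
        rw [Finset.mem_filter] at hi
        rw [hi.2]
      rw [Finset.prod_congr rfl (fun j _ => hg j)]
      have : ∀ j : Fin n, (if j ∈ s then (-1:𝕜) else 1)^(Finset.univ.filter
          (fun i => r i = j)).card
          = (if j ∈ s then (-1:𝕜)^(Finset.univ.filter (fun i => r i = j)).card else 1) := by
        intro j
        split <;> simp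
      rw [Finset.prod_congr rfl (fun j _ => this j), Finset.prod_ite_mem]
      rw [Finset.univ_inter]
    rw [h1, h2, ← Finset.prod_mul_distrib]
  rw [Finset.sum_congr rfl (fun s _ => key s)]
  rw [Finset.prod_add]
  rw [← Finset.powerset_univ]
  apply Finset.sum_congr rfl
  intro s _
  simp

lemma polarization (T : CMM) (hT : IsSymmML T) (x : Fin n → X) :
    ((2:𝕜)^n * (n.factorial : 𝕜)) • T x =
      ∑ s : Finset (Fin n), ((-1:𝕜)^s.card) •
        T (fun _ => ∑ j : Fin n, (if j ∈ s then (-1:𝕜) else 1) • x j) := by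
  classical
  set e : Finset (Fin n) → Fin n → 𝕜 := fun s j => if j ∈ s then -1 else 1 with he
  have step1 : ∀ s : Finset (Fin n),
      T (fun _ => ∑ j : Fin n, e s j • x j)
        = ∑ r : Fin n → Fin n, (∏ i : Fin n, e s (r i)) • T (x ∘ r) := by
    intro s
    have h1 : T (fun _ => ∑ j : Fin n, e s j • x j)
        = ∑ r : Fin n → Fin n, T (fun i => e s (r i) • x (r i)) := by
      exact T.toMultilinearMap.map_sum (fun _ j => e s j • x j)
    rw [h1]
    apply Finset.sum_congr rfl
    intro r _
    exact T.toMultilinearMap.map_smul_univ (fun i => e s (r i)) (x ∘ r)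
  have main : ∑ r : Fin n → Fin n,
      (∑ s : Finset (Fin n), (-1:𝕜)^s.card * ∏ i : Fin n, e s (r i)) • T (x ∘ r)
      = ((2:𝕜)^n * (n.factorial : 𝕜)) • T x := by
    have hcoef : ∀ r : Fin n → Fin n,
        (∑ s : Finset (Fin n), (-1:𝕜)^s.card * ∏ i : Fin n, e s (r i))
        = if Function.Bijective r then (2:𝕜)^n else 0 := by
      intro r
      rw [he]
      rw [coeff_eval r]
      by_cases hb : Function.Bijective r
      · rw [if_pos hb]
        have hcnt : ∀ j : Fin n, (Finset.univ.filter (fun i => r i = j)).card = 1 := by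
          intro j
          rw [Finset.card_eq_one]
          obtain ⟨i0, hi0⟩ := hb.2 j
          refine ⟨i0, ?_⟩
          ext i
          simp only [Finset.mem_filter, Finset.mem_univ, true_and, Finset.mem_singleton]
          constructor
          · intro hri; exact hb.1 (hri.trans hi0.symm)
          · rintro rfl; exact hi0
        rw [Finset.prod_congr rfl (fun j _ => by rw [hcnt j])]
        norm_num
      · rw [if_neg hb]
        have hns : ¬ Function.Surjective r := by
          intro hs
          exact hb (Finite.surjective_iff_bijective.mp hs)
        rw [Function.Surjective] at hns
        push_neg at hns
        obtain ⟨j0, hj0⟩ := hns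
        apply Finset.prod_eq_zero (Finset.mem_univ j0)
        have : (Finset.univ.filter (fun i => r i = j0)).card = 0 := by
          rw [Finset.card_eq_zero]
          ext i
          simp only [Finset.mem_filter, Finset.mem_univ, true_and, Finset.notMem_empty,
            iff_false]
          exact hj0 i
        rw [this]
        norm_num
    rw [Finset.sum_congr rfl (fun r _ => by rw [hcoef r])]
    have hsplit : ∑ r : Fin n → Fin n,
        (if Function.Bijective r then (2:𝕜)^n else 0) • T (x ∘ r)
        = ∑ r : Fin n → Fin n,
          (if Function.Bijective r then (2:𝕜)^n • T (x ∘ r) else 0) := by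
      apply Finset.sum_congr rfl
      intro r _
      split <;> simp
    rw [hsplit, ← Finset.sum_filter]
    have hval : ∀ r ∈ Finset.univ.filter (fun r : Fin n → Fin n => Function.Bijective r),
        (2:𝕜)^n • T (x ∘ r) = (2:𝕜)^n • T x := by
      intro r hr
      rw [Finset.mem_filter] at hr
      congr 1
      exact hT (Equiv.ofBijective r hr.2) x
    rw [Finset.sum_congr rfl hval, Finset.sum_const]
    have hcard : (Finset.univ.filter (fun r : Fin n → Fin n => Function.Bijective r)).card
        = n.factorial := by
      rw [← Fintype.card_subtype]
      have he2 : Equiv.Perm (Fin n) ≃ {r : Fin n → Fin n // Function.Bijective r} :=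
        ⟨fun σ => ⟨σ, σ.bijective⟩, fun f => Equiv.ofBijective f.1 f.2,
          fun σ => by ext i; rfl, fun f => by ext i; rfl⟩
      rw [← Fintype.card_congr he2, Fintype.card_perm, Fintype.card_fin]
    rw [hcard, ← Nat.cast_smul_eq_nsmul 𝕜, smul_smul, mul_comm]
  calc ((2:𝕜)^n * (n.factorial : 𝕜)) • T x
      = ∑ r : Fin n → Fin n,
          (∑ s : Finset (Fin n), (-1:𝕜)^s.card * ∏ i : Fin n, e s (r i)) • T (x ∘ r) :=
        main.symm
    _ = ∑ r : Fin n → Fin n, ∑ s : Finset (Fin n),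
          ((-1:𝕜)^s.card * ∏ i : Fin n, e s (r i)) • T (x ∘ r) := by
        apply Finset.sum_congr rfl
        intro r _
        rw [Finset.sum_smul]
    _ = ∑ s : Finset (Fin n), ∑ r : Fin n → Fin n,
          ((-1:𝕜)^s.card * ∏ i : Fin n, e s (r i)) • T (x ∘ r) := Finset.sum_comm
    _ = ∑ s : Finset (Fin n), ((-1:𝕜)^s.card) •
          T (fun _ => ∑ j : Fin n, e s j • x j) := by
        apply Finset.sum_congr rfl
        intro s _
        rw [step1, Finset.smul_sum]
        apply Finset.sum_congr rfl
        intro r _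
        rw [smul_smul]


lemma ubp [CompleteSpace X] {ι : Type*} :
    ∀ (m : ℕ) (F : ι → ContinuousMultilinearMap 𝕜 (fun _ : Fin m => X) Y),
      (∀ x : Fin m → X, ∃ C, ∀ i, ‖F i x‖ ≤ C) → ∃ C, ∀ i, ‖F i‖ ≤ C := by
  intro m
  induction m with
  | zero =>
    intro F h
    obtain ⟨C, hC⟩ := h (fun i => i.elim0)
    refine ⟨max C 0, fun i => ?_⟩
    apply ContinuousMultilinearMap.opNorm_le_bound (le_max_right C 0)
    intro v
    have hv : v = (fun i => i.elim0) := by funext i; exact i.elim0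
    rw [hv]
    simp only [Finset.univ_eq_empty, Finset.prod_empty, mul_one]
    exact le_trans (hC i) (le_max_left C 0)
  | succ m IH =>
    intro F h
    set g : ι → X →L[𝕜] ContinuousMultilinearMap 𝕜 (fun _ : Fin m => X) Y :=
      fun i => (F i).curryLeft with hg
    have hpt : ∀ x : X, ∃ C, ∀ i, ‖g i x‖ ≤ C := by
      intro x
      apply IH (fun i => g i x)
      intro v
      obtain ⟨C, hC⟩ := h (Fin.cons x v)
      exact ⟨C, fun i => hC i⟩
    obtain ⟨C', hC'⟩ := banach_steinhaus hpt
    refine ⟨C', fun i => ?_⟩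
    rw [← ContinuousMultilinearMap.curryLeft_norm]
    exact hC' i

def qset (G : ℕ → CMM) (m : ℕ) : Set CMM :=
  {H | ∃ (s : Finset ℕ) (w : ℕ → ℝ), (∀ j ∈ s, m ≤ j) ∧ (∀ j ∈ s, 0 ≤ w j) ∧
    (∑ j ∈ s, w j) = 1 ∧ H = ∑ j ∈ s, (w j : 𝕜) • G j}

lemma qset_nonempty (G : ℕ → CMM) (m : ℕ) : (G m) ∈ qset G m := by
  refine ⟨{m}, fun _ => 1, by simp, by simp, by simp, by simp⟩

lemma qset_mono (G : ℕ → CMM) {m m' : ℕ} (h : m ≤ m') : qset G m' ⊆ qset G m := by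
  rintro H ⟨s, w, hs, hw, hsum, rfl⟩
  exact ⟨s, w, fun j hj => le_trans h (hs j hj), hw, hsum, rfl⟩

lemma qset_norm_le (G : ℕ → CMM) {M : ℝ} (hM : ∀ k, ‖G k‖ ≤ M) {m : ℕ} {H : CMM}
    (hH : H ∈ qset G m) : ‖H‖ ≤ M := by
  obtain ⟨s, w, hs, hw, hsum, rfl⟩ := hH
  calc ‖∑ j ∈ s, (w j : 𝕜) • G j‖ ≤ ∑ j ∈ s, ‖(w j : 𝕜) • G j‖ := norm_sum_le _ _
  _ ≤ ∑ j ∈ s, w j * M := by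
      apply Finset.sum_le_sum
      intro j hj
      refine le_trans (ContinuousMultilinearMap.opNorm_smul_le _ _) ?_
      rw [RCLike.norm_ofReal, abs_of_nonneg (hw j hj)]
      exact mul_le_mul_of_nonneg_left (hM j) (hw j hj)
  _ = M := by rw [← Finset.sum_mul, hsum, one_mul]

lemma qset_eval_le (G : ℕ → CMM) {m : ℕ} {H : CMM} (hH : H ∈ qset G m) (x : Fin n → X)
    {c : ℝ} (hc : ∀ j, m ≤ j → ‖G j x‖ ≤ c) : ‖H x‖ ≤ c := by
  obtain ⟨s, w, hs, hw, hsum, rfl⟩ := hH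
  calc ‖(∑ j ∈ s, (w j : 𝕜) • G j) x‖ = ‖∑ j ∈ s, (w j : 𝕜) • G j x‖ := by
        rw [ContinuousMultilinearMap.sum_apply]
        simp [ContinuousMultilinearMap.smul_apply]
  _ ≤ ∑ j ∈ s, w j * ‖G j x‖ := by
      refine le_trans (norm_sum_le _ _) ?_
      apply Finset.sum_le_sum
      intro j hj
      rw [norm_smul, RCLike.norm_ofReal, abs_of_nonneg (hw j hj)]
  _ ≤ ∑ j ∈ s, w j * c := by
      apply Finset.sum_le_sum
      intro j hj
      exact mul_le_mul_of_nonneg_left (hc j (hs j hj)) (hw j hj)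
  _ = c := by rw [← Finset.sum_mul, hsum, one_mul]

lemma isSymm_sum {ι : Type*} (s : Finset ι) (Q : ι → CMM) (h : ∀ j ∈ s, IsSymmML (Q j)) :
    IsSymmML (∑ j ∈ s, Q j) := by
  intro σ x
  rw [ContinuousMultilinearMap.sum_apply, ContinuousMultilinearMap.sum_apply]
  exact Finset.sum_congr rfl (fun j hj => h j hj σ x)

lemma isSymm_smul (c : 𝕜) (Q : CMM) (h : IsSymmML Q) : IsSymmML (c • Q) := by
  intro σ x
  rw [ContinuousMultilinearMap.smul_apply, ContinuousMultilinearMap.smul_apply, h σ x]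

lemma qset_symm (G : ℕ → CMM) (hG : ∀ k, IsSymmML (G k)) {m : ℕ} {H : CMM}
    (hH : H ∈ qset G m) : IsSymmML H := by
  obtain ⟨s, w, hs, hw, hsum, rfl⟩ := hH
  exact isSymm_sum s _ (fun j _ => isSymm_smul _ _ (hG j))

lemma qset_mid (G : ℕ → CMM) {m : ℕ} {H₁ H₂ : CMM} (h₁ : H₁ ∈ qset G m)
    (h₂ : H₂ ∈ qset G m) :
    (((2⁻¹ : ℝ) : 𝕜) • H₁ + ((2⁻¹ : ℝ) : 𝕜) • H₂) ∈ qset G m := by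
  classical
  obtain ⟨s₁, w₁, hs₁, hw₁, hsum₁, rfl⟩ := h₁
  obtain ⟨s₂, w₂, hs₂, hw₂, hsum₂, rfl⟩ := h₂
  refine ⟨s₁ ∪ s₂,
    fun j => 2⁻¹ * (if j ∈ s₁ then w₁ j else 0) + 2⁻¹ * (if j ∈ s₂ then w₂ j else 0),
    ?_, ?_, ?_, ?_⟩
  · intro j hj
    rcases Finset.mem_union.1 hj with hj | hj
    exacts [hs₁ j hj, hs₂ j hj]
  · intro j _
    have a1 : (0:ℝ) ≤ (if j ∈ s₁ then w₁ j else 0) := by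
      split
      · exact hw₁ j (by assumption)
      · exact le_refl 0
    have a2 : (0:ℝ) ≤ (if j ∈ s₂ then w₂ j else 0) := by
      split
      · exact hw₂ j (by assumption)
      · exact le_refl 0
    dsimp only
    linarith
  · dsimp only
    rw [Finset.sum_add_distrib, ← Finset.mul_sum, ← Finset.mul_sum,
      Finset.sum_ite_mem, Finset.sum_ite_mem, Finset.union_inter_cancel_left,
      Finset.union_inter_cancel_right, hsum₁, hsum₂]
    norm_num
  · dsimp only
    have key : ∀ (t : Finset ℕ) (w : ℕ → ℝ),
        (∑ j ∈ s₁ ∪ s₂, ((2⁻¹ * if j ∈ t then w j else 0 : ℝ) : 𝕜) • G j)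
        = ((2⁻¹ : ℝ) : 𝕜) • ∑ j ∈ t ∩ (s₁ ∪ s₂), (w j : 𝕜) • G j := by
      intro t w
      rw [Finset.smul_sum]
      have : ∀ j ∈ s₁ ∪ s₂, ((2⁻¹ * if j ∈ t then w j else 0 : ℝ) : 𝕜) • G j
          = (if j ∈ t then ((2⁻¹:ℝ):𝕜) • ((w j : 𝕜) • G j) else 0) := by
        intro j _
        split <;> simp [RCLike.ofReal_mul, mul_smul]
      rw [Finset.sum_congr rfl this, Finset.sum_ite_mem, Finset.inter_comm]
    have e1 : ∀ j ∈ s₁ ∪ s₂, (((2⁻¹ * if j ∈ s₁ then w₁ j else 0)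
        + (2⁻¹ * if j ∈ s₂ then w₂ j else 0) : ℝ) : 𝕜) • G j
        = ((2⁻¹ * if j ∈ s₁ then w₁ j else 0 : ℝ) : 𝕜) • G j
          + ((2⁻¹ * if j ∈ s₂ then w₂ j else 0 : ℝ) : 𝕜) • G j := by
      intro j _
      rw [RCLike.ofReal_add, add_smul]
    rw [Finset.sum_congr rfl e1, Finset.sum_add_distrib, key s₁ w₁, key s₂ w₂,
      Finset.inter_comm s₁ (s₁ ∪ s₂), Finset.union_inter_cancel_left,
      Finset.inter_comm s₂ (s₁ ∪ s₂), Finset.union_inter_cancel_right]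


noncomputable def wgt (k : ℕ) : ℝ := (2⁻¹ : ℝ)^k

lemma wgt_pos (k : ℕ) : 0 < wgt k := by unfold wgt; positivity

lemma wgt_le_one (k : ℕ) : wgt k ≤ 1 := by
  unfold wgt
  exact pow_le_one₀ (by norm_num) (by norm_num)

lemma wgt_zero : wgt 0 = 1 := rfl

lemma wgt_succ (k : ℕ) : wgt (k+1) = 2⁻¹ * wgt k := by rw [wgt, pow_succ, mul_comm]; rfl

noncomputable def epsd (d : ℝ) (m : ℕ) : ℝ := d/8 * (wgt m)^2

lemma epsd_pos {d : ℝ} (hd : 0 < d) (m : ℕ) : 0 < epsd d m := by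
  unfold epsd
  have := wgt_pos m
  positivity

noncomputable def ddf (G : ℕ → CMM) (m : ℕ) (V : CMM) : ℝ :=
  sInf ((fun H => polyNorm (V + ((wgt m : ℝ) : 𝕜) • H)) '' qset G (m+1))

lemma ddf_set_nonempty (G : ℕ → CMM) (m : ℕ) (V : CMM) :
    ((fun H => polyNorm (V + ((wgt m : ℝ) : 𝕜) • H)) '' qset G (m+1)).Nonempty :=
  ⟨_, ⟨G (m+1), qset_nonempty G (m+1), rfl⟩⟩

lemma ddf_set_bddBelow (G : ℕ → CMM) (m : ℕ) (V : CMM) :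
    BddBelow ((fun H => polyNorm (V + ((wgt m : ℝ) : 𝕜) • H)) '' qset G (m+1)) := by
  refine ⟨0, ?_⟩
  rintro r ⟨H, _, rfl⟩
  exact polyNorm_nonneg _

lemma ddf_nonneg (G : ℕ → CMM) (m : ℕ) (V : CMM) : 0 ≤ ddf G m V :=
  le_csInf (ddf_set_nonempty G m V) (by rintro r ⟨H, _, rfl⟩; exact polyNorm_nonneg _)

lemma ddf_le (G : ℕ → CMM) (m : ℕ) (V : CMM) {H : CMM} (hH : H ∈ qset G (m+1)) :
    ddf G m V ≤ polyNorm (V + ((wgt m : ℝ) : 𝕜) • H) :=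
  csInf_le (ddf_set_bddBelow G m V) ⟨H, hH, rfl⟩

lemma le_ddf (G : ℕ → CMM) (m : ℕ) (V : CMM) {c : ℝ}
    (h : ∀ H ∈ qset G (m+1), c ≤ polyNorm (V + ((wgt m : ℝ) : 𝕜) • H)) :
    c ≤ ddf G m V :=
  le_csInf (ddf_set_nonempty G m V) (by rintro r ⟨H, hH, rfl⟩; exact h H hH)

lemma ddf_exists_near (G : ℕ → CMM) (m : ℕ) (V : CMM) {ε : ℝ} (hε : 0 < ε) :
    ∃ H ∈ qset G (m+1), polyNorm (V + ((wgt m : ℝ) : 𝕜) • H) ≤ ddf G m V + ε := by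
  obtain ⟨a, ⟨H, hH, rfl⟩, ha⟩ := Real.lt_sInf_add_pos (ddf_set_nonempty G m V) hε
  exact ⟨H, hH, le_of_lt ha⟩

noncomputable def seqP (G : ℕ → CMM) (d : ℝ) : ℕ → CMM × CMM :=
  fun N => Nat.rec ((0 : CMM), (0 : CMM))
    (fun m ih =>
      let V := ih.1
      let H0 := if h : ∃ H ∈ qset G (m+1),
          polyNorm (V + ((wgt m : ℝ) : 𝕜) • H) ≤ ddf G m V + epsd d m
        then h.choose else 0
      (V + ((wgt (m+1) : ℝ) : 𝕜) • H0, H0)) N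

lemma seqP_zero (G : ℕ → CMM) (d : ℝ) : seqP G d 0 = (0, 0) := rfl

lemma seqP_succ (G : ℕ → CMM) (d : ℝ) (m : ℕ) :
    (seqP G d (m+1)).1 = (seqP G d m).1 + ((wgt (m+1) : ℝ) : 𝕜) • (seqP G d (m+1)).2 :=
  rfl

lemma seqP_spec (G : ℕ → CMM) {d : ℝ} (hd : 0 < d) (m : ℕ) :
    (seqP G d (m+1)).2 ∈ qset G (m+1) ∧
      polyNorm ((seqP G d m).1 + ((wgt m : ℝ) : 𝕜) • (seqP G d (m+1)).2)
        ≤ ddf G m ((seqP G d m).1) + epsd d m := by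
  have hex : ∃ H ∈ qset G (m+1),
      polyNorm ((seqP G d m).1 + ((wgt m : ℝ) : 𝕜) • H)
        ≤ ddf G m ((seqP G d m).1) + epsd d m :=
    ddf_exists_near G m _ (epsd_pos hd m)
  have h2 : (seqP G d (m+1)).2 = hex.choose := by
    show (let V := (seqP G d m).1;
      let H0 := if h : ∃ H ∈ qset G (m+1),
          polyNorm (V + ((wgt m : ℝ) : 𝕜) • H) ≤ ddf G m V + epsd d m
        then h.choose else 0
      ((V + ((wgt (m+1) : ℝ) : 𝕜) • H0, H0) : CMM × CMM)).2 = hex.choose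
    simp only [dif_pos hex]
  rw [h2]
  exact ⟨hex.choose_spec.1, hex.choose_spec.2⟩


noncomputable def Vp (G : ℕ → CMM) (d : ℝ) (m : ℕ) : CMM := (seqP G d m).1
noncomputable def Omp (G : ℕ → CMM) (d : ℝ) (m : ℕ) : CMM := (seqP G d m).2
noncomputable def ddq (G : ℕ → CMM) (d : ℝ) (m : ℕ) : ℝ := ddf G m (Vp G d m)

lemma Vp_zero (G : ℕ → CMM) (d : ℝ) : Vp G d 0 = 0 := rfl
lemma Omp_zero (G : ℕ → CMM) (d : ℝ) : Omp G d 0 = 0 := rfl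

lemma Vp_succ (G : ℕ → CMM) (d : ℝ) (m : ℕ) :
    Vp G d (m+1) = Vp G d m + ((wgt (m+1) : ℝ) : 𝕜) • Omp G d (m+1) := rfl

lemma Omp_mem (G : ℕ → CMM) {d : ℝ} (hd : 0 < d) (m : ℕ) :
    Omp G d (m+1) ∈ qset G (m+1) := (seqP_spec G hd m).1

lemma Omp_near (G : ℕ → CMM) {d : ℝ} (hd : 0 < d) (m : ℕ) :
    polyNorm (Vp G d m + ((wgt m : ℝ) : 𝕜) • Omp G d (m+1)) ≤ ddq G d m + epsd d m :=
  (seqP_spec G hd m).2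

lemma smul_wgt_half (m : ℕ) (T : CMM) :
    ((wgt m : ℝ) : 𝕜) • (((2⁻¹ : ℝ) : 𝕜) • T) = ((wgt (m+1) : ℝ) : 𝕜) • T := by
  rw [smul_smul, ← RCLike.ofReal_mul, wgt_succ, mul_comm]

lemma dd_mono (G : ℕ → CMM) {d : ℝ} (hd : 0 < d) (m : ℕ) :
    ddq G d m ≤ ddq G d (m+1) := by
  apply le_ddf
  intro H hH
  have hmid : (((2⁻¹ : ℝ) : 𝕜) • Omp G d (m+1) + ((2⁻¹ : ℝ) : 𝕜) • H) ∈ qset G (m+1) :=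
    qset_mid G (Omp_mem G hd m) (qset_mono G (Nat.le_succ _) hH)
  have heq : Vp G d (m+1) + ((wgt (m+1) : ℝ) : 𝕜) • H
      = Vp G d m + ((wgt m : ℝ) : 𝕜) •
          (((2⁻¹ : ℝ) : 𝕜) • Omp G d (m+1) + ((2⁻¹ : ℝ) : 𝕜) • H) := by
    rw [Vp_succ, smul_add, smul_wgt_half, smul_wgt_half, add_assoc]
  rw [heq]
  exact ddf_le G m _ hmid

lemma half_half (T : CMM) : ((2⁻¹ : ℝ) : 𝕜) • T + ((2⁻¹ : ℝ) : 𝕜) • T = T := by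
  rw [← add_smul, ← RCLike.ofReal_add]
  norm_num

lemma pV_inv (G : ℕ → CMM) {d : ℝ} (hd : 0 < d) (m : ℕ) :
    polyNorm (Vp G d m) ≤ (1 - wgt m) * ddq G d m + d/4 * wgt m * (1 - wgt m) := by
  induction m with
  | zero =>
    rw [Vp_zero, polyNorm_zero, wgt_zero]
    norm_num
  | succ m IH =>
    have hsplit : Vp G d (m+1) = ((2⁻¹ : ℝ) : 𝕜) • (Vp G d m)
        + ((2⁻¹ : ℝ) : 𝕜) • (Vp G d m + ((wgt m : ℝ) : 𝕜) • Omp G d (m+1)) := by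
      rw [smul_add, ← add_assoc]
      have h1 : ((2⁻¹:ℝ):𝕜) • Vp G d m + ((2⁻¹:ℝ):𝕜) • Vp G d m = Vp G d m := half_half _
      rw [h1]
      have h2 : ((2⁻¹:ℝ):𝕜) • (((wgt m : ℝ) : 𝕜) • Omp G d (m+1))
          = ((wgt (m+1) : ℝ) : 𝕜) • Omp G d (m+1) := by
        rw [smul_smul, ← RCLike.ofReal_mul, wgt_succ]
      rw [h2, Vp_succ]
    have hstep : polyNorm (Vp G d (m+1)) ≤
        2⁻¹ * polyNorm (Vp G d m)
        + 2⁻¹ * polyNorm (Vp G d m + ((wgt m : ℝ) : 𝕜) • Omp G d (m+1)) := by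
      rw [hsplit]
      refine le_trans (polyNorm_add_le _ _) ?_
      exact add_le_add (polyNorm_smul_le _ _ (by norm_num)) (polyNorm_smul_le _ _ (by norm_num))
    have hnear := Omp_near G hd m
    have hmono := dd_mono G hd m
    have hw1 : wgt (m+1) = 2⁻¹ * wgt m := wgt_succ m
    have hwle : wgt (m+1) ≤ 1 := wgt_le_one _
    have hdd0 : 0 ≤ ddq G d m := ddf_nonneg G m _
    calc polyNorm (Vp G d (m+1))
        ≤ 2⁻¹ * polyNorm (Vp G d m)
          + 2⁻¹ * polyNorm (Vp G d m + ((wgt m : ℝ) : 𝕜) • Omp G d (m+1)) := hstep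
      _ ≤ 2⁻¹ * ((1 - wgt m) * ddq G d m + d/4 * wgt m * (1 - wgt m))
          + 2⁻¹ * (ddq G d m + epsd d m) := by
          exact add_le_add (by linarith) (by linarith)
      _ = (1 - wgt (m+1)) * ddq G d m + d/4 * wgt (m+1) * (1 - wgt (m+1)) := by
          rw [hw1, epsd]; ring
      _ ≤ (1 - wgt (m+1)) * ddq G d (m+1) + d/4 * wgt (m+1) * (1 - wgt (m+1)) := by
          have : (1 - wgt (m+1)) * ddq G d m ≤ (1 - wgt (m+1)) * ddq G d (m+1) :=
            mul_le_mul_of_nonneg_left hmono (by linarith)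
          linarith

lemma isSymm_zero : IsSymmML (0 : CMM) := by
  intro σ x
  simp

lemma isSymm_add {A B : CMM} (hA : IsSymmML A) (hB : IsSymmML B) : IsSymmML (A + B) := by
  intro σ x
  rw [ContinuousMultilinearMap.add_apply, ContinuousMultilinearMap.add_apply, hA σ x, hB σ x]

lemma Vp_symm (G : ℕ → CMM) {d : ℝ} (hd : 0 < d) (hG : ∀ k, IsSymmML (G k)) (m : ℕ) :
    IsSymmML (Vp G d m) := by
  induction m with
  | zero => rw [Vp_zero]; exact isSymm_zero
  | succ m IH =>
    rw [Vp_succ]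
    exact isSymm_add IH (isSymm_smul _ _ (qset_symm G hG (Omp_mem G hd m)))

lemma sum_wgt_le (a b : ℕ) : (∑ k ∈ Finset.Ico a b, wgt k) ≤ 2 * wgt a := by
  rcases le_or_gt a b with hab | hab
  · rw [Finset.sum_Ico_eq_sum_range]
    have : ∀ i, wgt (a + i) = wgt a * (2⁻¹:ℝ)^i := by
      intro i
      rw [wgt, wgt, pow_add]
    rw [Finset.sum_congr rfl (fun i _ => this i), ← Finset.mul_sum]
    have hg : (∑ i ∈ Finset.range (b - a), (2⁻¹:ℝ)^i) ≤ 2 := by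
      have := sum_geometric_two_le (b - a)
      simpa [one_div] using this
    have := wgt_pos a
    calc wgt a * (∑ i ∈ Finset.range (b - a), (2⁻¹:ℝ)^i) ≤ wgt a * 2 :=
          mul_le_mul_of_nonneg_left hg (le_of_lt this)
    _ = 2 * wgt a := mul_comm _ _
  · rw [Finset.Ico_eq_empty (by omega)]
    simp
    have := wgt_pos a
    positivity

lemma norm_g_le (G : ℕ → CMM) {d M : ℝ} (hd : 0 < d) (hM : ∀ k, ‖G k‖ ≤ M) (hM0 : 0 ≤ M)
    (k : ℕ) : ‖((wgt k : ℝ) : 𝕜) • Omp G d k‖ ≤ M * wgt k := by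
  have hn : ‖Omp G d k‖ ≤ M := by
    cases k with
    | zero => rw [Omp_zero]; simpa using hM0
    | succ m => exact qset_norm_le G hM (Omp_mem G hd m)
  calc ‖((wgt k : ℝ) : 𝕜) • Omp G d k‖ ≤ ‖((wgt k : ℝ) : 𝕜)‖ * ‖Omp G d k‖ :=
        ContinuousMultilinearMap.opNorm_smul_le _ _
  _ = wgt k * ‖Omp G d k‖ := by
      rw [RCLike.norm_ofReal, abs_of_nonneg (le_of_lt (wgt_pos k))]
  _ ≤ wgt k * M := mul_le_mul_of_nonneg_left hn (le_of_lt (wgt_pos k))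
  _ = M * wgt k := mul_comm _ _

lemma half_comb (m : ℕ) (V A B : CMM) :
    V + ((wgt m : ℝ) : 𝕜) • (((2⁻¹:ℝ):𝕜) • A + ((2⁻¹:ℝ):𝕜) • B)
      = ((2⁻¹:ℝ):𝕜) • (V + ((wgt m : ℝ) : 𝕜) • A)
        + ((2⁻¹:ℝ):𝕜) • (V + ((wgt m : ℝ) : 𝕜) • B) := by
  have hc : ∀ T : CMM, ((2⁻¹:ℝ):𝕜) • (((wgt m : ℝ) : 𝕜) • T) = ((wgt (m+1) : ℝ) : 𝕜) • T := by
    intro T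
    rw [smul_smul, ← RCLike.ofReal_mul, wgt_succ]
  rw [smul_add, smul_wgt_half, smul_wgt_half, smul_add, smul_add, hc, hc]
  calc V + (((wgt (m+1) : ℝ) : 𝕜) • A + ((wgt (m+1) : ℝ) : 𝕜) • B)
      = (((2⁻¹:ℝ):𝕜) • V + ((2⁻¹:ℝ):𝕜) • V)
        + (((wgt (m+1) : ℝ) : 𝕜) • A + ((wgt (m+1) : ℝ) : 𝕜) • B) := by
        rw [half_half]
    _ = ((2⁻¹:ℝ):𝕜) • V + ((wgt (m+1) : ℝ) : 𝕜) • A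
        + (((2⁻¹:ℝ):𝕜) • V + ((wgt (m+1) : ℝ) : 𝕜) • B) := by abel

lemma hroll (G : ℕ → CMM) {d : ℝ} (hd : 0 < d) (m : ℕ) :
    ∀ K, m ≤ K → ∀ H ∈ qset G (K+1), ∃ ρ ∈ qset G (m+1),
      Vp G d K + ((wgt K : ℝ) : 𝕜) • H = Vp G d m + ((wgt m : ℝ) : 𝕜) • ρ := by
  intro K hmK
  induction K, hmK using Nat.le_induction with
  | base =>
    intro H hH
    exact ⟨H, hH, rfl⟩
  | succ K hK IH =>
    intro H hH
    obtain ⟨ρ₁, hρ₁, heq₁⟩ := IH (Omp G d (K+1)) (Omp_mem G hd K)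
    obtain ⟨ρ₂, hρ₂, heq₂⟩ := IH H (qset_mono G (Nat.le_succ _) hH)
    refine ⟨((2⁻¹:ℝ):𝕜) • ρ₁ + ((2⁻¹:ℝ):𝕜) • ρ₂, qset_mid G hρ₁ hρ₂, ?_⟩
    have hidentity : Vp G d (K+1) + ((wgt (K+1) : ℝ) : 𝕜) • H
        = ((2⁻¹:ℝ):𝕜) • (Vp G d K + ((wgt K : ℝ) : 𝕜) • Omp G d (K+1))
          + ((2⁻¹:ℝ):𝕜) • (Vp G d K + ((wgt K : ℝ) : 𝕜) • H) := by
      rw [Vp_succ]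
      have := half_comb K (Vp G d K) (Omp G d (K+1)) H
      rw [smul_add, smul_wgt_half, smul_wgt_half] at this
      rw [← add_assoc] at this
      exact this
    rw [hidentity, heq₁, heq₂, half_comb m]

end Stmt7Aux

set_option maxHeartbeats 2000000 in
open Stmt7Aux in
/-- Lemma 2.15: if a convex, polynomial-norm-closed set of continuous `n`-homogeneous
polynomials is not sequentially closed under pointwise convergence, then some continuous
`n`-homogeneous polynomial fails to attain its norm. -/
theorem stmt7 [CompleteSpace X] [CompleteSpace Y]
    (C : Set (ContinuousMultilinearMap 𝕜 (fun _ : Fin n => X) Y))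
    (hsymm : ∀ T ∈ C, IsSymmML T)
    (hclosed : ∀ T : ContinuousMultilinearMap 𝕜 (fun _ : Fin n => X) Y, IsSymmML T →
      (∀ ε : ℝ, 0 < ε → ∃ S ∈ C, polyNorm (T - S) ≤ ε) → T ∈ C)
    (hconvex : ∀ T ∈ C, ∀ S ∈ C, ∀ t : ℝ, 0 ≤ t → t ≤ 1 →
      ((t : 𝕜) • T + ((1 - t : ℝ) : 𝕜) • S) ∈ C)
    (hnotseqclosed : ∃ (P : ℕ → ContinuousMultilinearMap 𝕜 (fun _ : Fin n => X) Y)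
      (P₀ : ContinuousMultilinearMap 𝕜 (fun _ : Fin n => X) Y),
        (∀ k, P k ∈ C) ∧ IsSymmML P₀ ∧ P₀ ∉ C ∧
        ∀ x : X, Filter.Tendsto (fun k => ‖P k (fun _ => x) - P₀ (fun _ => x)‖)
          Filter.atTop (nhds 0)) :
    ∃ T : ContinuousMultilinearMap 𝕜 (fun _ : Fin n => X) Y,
      IsSymmML T ∧ ¬ PolyNormAttaining T := by
  by_contra hcon
  push_neg at hcon
  obtain ⟨P, P₀, hPC, hP₀symm, hP₀notin, hptw⟩ := hnotseqclosed
  -- positive distance from `P₀` to `C` in the polynomial norm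
  have hdist : ∃ d : ℝ, 0 < d ∧ ∀ S ∈ C, d ≤ polyNorm (P₀ - S) := by
    by_contra hno
    push_neg at hno
    apply hP₀notin
    apply hclosed P₀ hP₀symm
    intro ε hε
    obtain ⟨S, hS, hlt⟩ := hno ε hε
    exact ⟨S, hS, le_of_lt hlt⟩
  obtain ⟨d, hd0, hdC⟩ := hdist
  set G : ℕ → ContinuousMultilinearMap 𝕜 (fun _ : Fin n => X) Y := fun k => P₀ - P k
    with hGdef
  have hGsymm : ∀ k, IsSymmML (G k) := by
    intro k σ x
    simp only [hGdef, ContinuousMultilinearMap.sub_apply]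
    rw [hsymm (P k) (hPC k) σ x, hP₀symm σ x]
  have hGtend : ∀ x : X, Tendsto (fun k => ‖G k (fun _ => x)‖) atTop (𝓝 0) := by
    intro x
    have heq : (fun k => ‖G k (fun _ => x)‖)
        = fun k => ‖P k (fun _ => x) - P₀ (fun _ => x)‖ := by
      funext k
      simp only [hGdef]
      rw [ContinuousMultilinearMap.sub_apply, norm_sub_rev]
    rw [heq]
    exact hptw x
  -- uniform boundedness
  have hptbound : ∀ v : Fin n → X, ∃ Cv : ℝ, ∀ k, ‖G k v‖ ≤ Cv := by
    intro v
    have hpol : ∀ k, ((2:ℝ)^n * n.factorial) * ‖G k v‖ ≤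
        ∑ s : Finset (Fin n),
          ‖G k (fun _ => ∑ j : Fin n, (if j ∈ s then (-1:𝕜) else 1) • v j)‖ := by
      intro k
      have hid := polarization (G k) (hGsymm k) v
      have hn1 : ‖((2:𝕜)^n * (n.factorial : 𝕜)) • G k v‖
          = ((2:ℝ)^n * n.factorial) * ‖G k v‖ := by
        rw [norm_smul, norm_mul, norm_pow, RCLike.norm_ofNat, RCLike.norm_natCast]
      rw [← hn1, hid]
      refine le_trans (norm_sum_le _ _) ?_
      apply Finset.sum_le_sum
      intro s _
      rw [norm_smul, norm_pow, norm_neg, norm_one, one_pow, one_mul]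
    have hBs : ∀ s : Finset (Fin n), ∃ B : ℝ, ∀ k,
        ‖G k (fun _ => ∑ j : Fin n, (if j ∈ s then (-1:𝕜) else 1) • v j)‖ ≤ B := by
      intro s
      have ht := hGtend (∑ j : Fin n, (if j ∈ s then (-1:𝕜) else 1) • v j)
      obtain ⟨B, hB⟩ := ht.bddAbove_range
      exact ⟨B, fun k => hB ⟨k, rfl⟩⟩
    choose B hB using hBs
    have hc : (0:ℝ) < (2:ℝ)^n * n.factorial := by positivity
    refine ⟨(∑ s : Finset (Fin n), B s) / ((2:ℝ)^n * n.factorial), fun k => ?_⟩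
    rw [le_div_iff₀ hc]
    calc ‖G k v‖ * ((2:ℝ)^n * n.factorial)
        = ((2:ℝ)^n * n.factorial) * ‖G k v‖ := mul_comm _ _
    _ ≤ ∑ s : Finset (Fin n),
          ‖G k (fun _ => ∑ j : Fin n, (if j ∈ s then (-1:𝕜) else 1) • v j)‖ := hpol k
    _ ≤ ∑ s : Finset (Fin n), B s := Finset.sum_le_sum (fun s _ => hB s k)
  obtain ⟨M, hM⟩ := ubp n G hptbound
  have hM0 : 0 ≤ M := le_trans (norm_nonneg (G 0)) (hM 0)
  -- the starting infimum is at least `d`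
  have hdd0 : d ≤ ddq G d 0 := by
    show d ≤ ddf G 0 (Vp G d 0)
    apply le_ddf
    intro H hH
    obtain ⟨s, w, hs, hw, hsum, rfl⟩ := hH
    have hcast : ((∑ j ∈ s, w j : ℝ) : 𝕜) = ∑ j ∈ s, ((w j : ℝ) : 𝕜) := by
      push_cast
      rfl
    have hform : (∑ j ∈ s, ((w j : ℝ) : 𝕜) • G j)
        = P₀ - ∑ j ∈ s, ((w j : ℝ) : 𝕜) • P j := by
      simp only [hGdef, smul_sub]
      rw [Finset.sum_sub_distrib, ← Finset.sum_smul, ← hcast, hsum, RCLike.ofReal_one, one_smul]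
    have hSC : (∑ j ∈ s, ((w j : ℝ) : 𝕜) • P j) ∈ C :=
      convexC C hconvex s w P hw hsum (fun j _ => hPC j)
    rw [Vp_zero]
    have hw0 : ((wgt 0 : ℝ) : 𝕜) = 1 := by rw [wgt_zero, RCLike.ofReal_one]
    rw [hw0, one_smul, zero_add, hform]
    exact hdC _ hSC
  -- the limit polynomial Ω
  set g : ℕ → ContinuousMultilinearMap 𝕜 (fun _ : Fin n => X) Y :=
    fun k => ((wgt k : ℝ) : 𝕜) • Omp G d k with hgdef
  have hgle : ∀ k, ‖g k‖ ≤ M * wgt k := fun k => norm_g_le G hd0 hM hM0 k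
  have hgsum : Summable g := by
    refine Summable.of_norm_bounded (g := fun k => M * (2⁻¹:ℝ)^k) ?_ ?_
    · exact (summable_geometric_of_lt_one (by norm_num) (by norm_num)).mul_left M
    · intro k
      exact hgle k
  set Ω : ContinuousMultilinearMap 𝕜 (fun _ : Fin n => X) Y := ∑' k, g k with hΩdef
  have hVsum : ∀ K, Vp G d K = ∑ k ∈ Finset.range (K+1), g k := by
    intro K
    induction K with
    | zero =>
      rw [Vp_zero, Finset.sum_range_one, hgdef]
      simp [Omp_zero]
    | succ K IH =>
      rw [Finset.sum_range_succ, ← IH, Vp_succ]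
  have hVtend : Tendsto (fun K => Vp G d K) atTop (𝓝 Ω) := by
    have h1 := hgsum.hasSum.tendsto_sum_nat
    have h2 := h1.comp (tendsto_add_atTop_nat 1)
    have h3 : ((fun m => ∑ k ∈ Finset.range m, g k) ∘ fun a => a + 1)
        = fun K => Vp G d K := by
      funext K
      simp only [Function.comp_apply]
      rw [hVsum K]
    rw [h3] at h2
    exact h2
  have htail : ∀ K, ‖Ω - Vp G d K‖ ≤ M * wgt K := by
    intro K
    have hle : ∀ L, K ≤ L → ‖Vp G d L - Vp G d K‖ ≤ M * wgt K := by
      intro L hKL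
      rw [hVsum L, hVsum K, ← Finset.sum_Ico_eq_sub _ (by omega : K+1 ≤ L+1)]
      calc ‖∑ k ∈ Finset.Ico (K+1) (L+1), g k‖
          ≤ ∑ k ∈ Finset.Ico (K+1) (L+1), ‖g k‖ := norm_sum_le _ _
      _ ≤ ∑ k ∈ Finset.Ico (K+1) (L+1), M * wgt k :=
          Finset.sum_le_sum (fun k _ => hgle k)
      _ = M * ∑ k ∈ Finset.Ico (K+1) (L+1), wgt k := by rw [Finset.mul_sum]
      _ ≤ M * (2 * wgt (K+1)) :=
          mul_le_mul_of_nonneg_left (sum_wgt_le _ _) hM0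
      _ = M * wgt K := by rw [wgt_succ]; ring
    have hcont : Tendsto (fun L => ‖Vp G d L - Vp G d K‖) atTop (𝓝 ‖Ω - Vp G d K‖) :=
      (hVtend.sub tendsto_const_nhds).norm
    exact le_of_tendsto hcont (eventually_atTop.2 ⟨K, hle⟩)
  have hΩsymm : IsSymmML Ω := by
    intro σ x
    have hev : ∀ y : Fin n → X, Tendsto (fun K => Vp G d K y) atTop (𝓝 (Ω y)) := by
      intro y
      exact ((continuous_eval_const y).tendsto Ω).comp hVtend
    have h1 := hev (x ∘ σ)
    have h2 := hev x
    have h3 : (fun K => Vp G d K (x ∘ σ)) = fun K => Vp G d K x :=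
      funext (fun K => Vp_symm G hd0 hGsymm K σ x)
    rw [h3] at h1
    exact tendsto_nhds_unique h1 h2
  -- each infimum is bounded by `polyNorm Ω`
  have hddle : ∀ m, ddq G d m ≤ polyNorm Ω := by
    intro m
    have hK : ∀ K, m ≤ K → ddq G d m ≤ polyNorm Ω + 2 * M * wgt K := by
      intro K hmK
      obtain ⟨ρ, hρ, heq⟩ := hroll G hd0 m K hmK (Omp G d (K+1)) (Omp_mem G hd0 K)
      have h1 : ddq G d m ≤
          polyNorm (Vp G d K + ((wgt K : ℝ) : 𝕜) • Omp G d (K+1)) := by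
        rw [heq]
        exact ddf_le G m _ hρ
      have h2 := polyNorm_le_add_dist
        (Vp G d K + ((wgt K : ℝ) : 𝕜) • Omp G d (K+1)) Ω
      have h3 : ‖Vp G d K + ((wgt K : ℝ) : 𝕜) • Omp G d (K+1) - Ω‖ ≤ 2 * M * wgt K := by
        have ha : Vp G d K + ((wgt K : ℝ) : 𝕜) • Omp G d (K+1) - Ω
            = (Vp G d K - Ω) + ((wgt K : ℝ) : 𝕜) • Omp G d (K+1) := by abel
        rw [ha]
        have hb : ‖Vp G d K - Ω‖ ≤ M * wgt K := by
          rw [norm_sub_rev]; exact htail K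
        have hcx : ‖((wgt K : ℝ) : 𝕜) • Omp G d (K+1)‖ ≤ wgt K * M := by
          refine le_trans (ContinuousMultilinearMap.opNorm_smul_le _ _) ?_
          rw [RCLike.norm_ofReal, abs_of_nonneg (le_of_lt (wgt_pos K))]
          exact mul_le_mul_of_nonneg_left (qset_norm_le G hM (Omp_mem G hd0 K))
            (le_of_lt (wgt_pos K))
        calc ‖(Vp G d K - Ω) + ((wgt K : ℝ) : 𝕜) • Omp G d (K+1)‖
            ≤ ‖Vp G d K - Ω‖ + ‖((wgt K : ℝ) : 𝕜) • Omp G d (K+1)‖ := norm_add_le _ _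
        _ ≤ M * wgt K + wgt K * M := add_le_add hb hcx
        _ = 2 * M * wgt K := by ring
      linarith
    have hwtend : Tendsto (fun K : ℕ => wgt K) atTop (𝓝 0) := by
      have := tendsto_pow_atTop_nhds_zero_of_lt_one
        (by norm_num : (0:ℝ) ≤ 2⁻¹) (by norm_num : (2⁻¹:ℝ) < 1)
      exact this
    have hlim : Tendsto (fun K => polyNorm Ω + 2 * M * wgt K) atTop (𝓝 (polyNorm Ω)) := by
      have h4 : Tendsto (fun K : ℕ => 2 * M * wgt K) atTop (𝓝 0) := by
        have := hwtend.const_mul (2*M)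
        simpa using this
      have h5 := (tendsto_const_nhds (x := polyNorm Ω) (f := atTop (α := ℕ))).add h4
      simpa using h5
    exact ge_of_tendsto hlim (eventually_atTop.2 ⟨m, hK⟩)
  -- the attaining point
  obtain ⟨xs, hxs1, hxs2⟩ := hcon Ω hΩsymm
  have hδd : d ≤ polyNorm Ω := le_trans hdd0 (hddle 0)
  set v : Y := Ω (fun _ => xs) with hvdef
  have hvn : ‖v‖ = polyNorm Ω := hxs2
  have hvne : v ≠ 0 := by
    intro hv0
    rw [hv0, norm_zero] at hvn
    linarith [hvn ▸ hδd]
  obtain ⟨gf, hgf1, hgfv⟩ := exists_dual_vector 𝕜 v (norm_ne_zero_iff.mpr hvne)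
  -- the index n₀
  obtain ⟨n₀, hn₀⟩ := Metric.tendsto_atTop.mp (hGtend xs) (d/4) (by linarith)
  have hn₀' : ∀ j, n₀ ≤ j → ‖G j (fun _ => xs)‖ ≤ d/4 := by
    intro j hj
    have := hn₀ j hj
    rw [Real.dist_eq, sub_zero, abs_of_nonneg (norm_nonneg _)] at this
    exact le_of_lt this
  -- bounds on the re-parts
  have hβ : ∀ k, n₀ + 1 ≤ k → RCLike.re (gf (Omp G d k (fun _ => xs))) ≤ d/4 := by
    intro k hk
    obtain ⟨m, rfl⟩ : ∃ m, k = m + 1 := ⟨k - 1, by omega⟩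
    have h1 : ‖Omp G d (m+1) (fun _ => xs)‖ ≤ d/4 :=
      qset_eval_le G (Omp_mem G hd0 m) _ (fun j hj => hn₀' j (by omega))
    calc RCLike.re (gf (Omp G d (m+1) (fun _ => xs)))
        ≤ ‖gf (Omp G d (m+1) (fun _ => xs))‖ := RCLike.re_le_norm _
    _ ≤ ‖gf‖ * ‖Omp G d (m+1) (fun _ => xs)‖ := gf.le_opNorm _
    _ = ‖Omp G d (m+1) (fun _ => xs)‖ := by rw [hgf1, one_mul]
    _ ≤ d/4 := h1
  -- partial sums estimate
  have hpartial : ∀ K, n₀ ≤ K →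
      RCLike.re (gf (Vp G d K (fun _ => xs)))
        ≤ RCLike.re (gf (Vp G d n₀ (fun _ => xs))) + wgt n₀ * (d/4) := by
    intro K hK
    have hdiff : Vp G d K - Vp G d n₀ = ∑ k ∈ Finset.Ico (n₀+1) (K+1), g k := by
      rw [hVsum K, hVsum n₀]
      exact (Finset.sum_Ico_eq_sub _ (by omega)).symm
    have heval : RCLike.re (gf (Vp G d K (fun _ => xs)))
        - RCLike.re (gf (Vp G d n₀ (fun _ => xs)))
        = ∑ k ∈ Finset.Ico (n₀+1) (K+1),
            wgt k * RCLike.re (gf (Omp G d k (fun _ => xs))) := by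
      have e1 : gf (Vp G d K (fun _ => xs)) - gf (Vp G d n₀ (fun _ => xs))
          = gf ((Vp G d K - Vp G d n₀) (fun _ => xs)) := by
        rw [ContinuousMultilinearMap.sub_apply, map_sub]
      have e2 : gf ((Vp G d K - Vp G d n₀) (fun _ => xs))
          = ∑ k ∈ Finset.Ico (n₀+1) (K+1), ((wgt k : ℝ) : 𝕜) * gf (Omp G d k (fun _ => xs)) := by
        rw [hdiff, ContinuousMultilinearMap.sum_apply, map_sum]
        apply Finset.sum_congr rfl
        intro k _
        rw [hgdef]
        rw [ContinuousMultilinearMap.smul_apply, map_smul, smul_eq_mul]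
      rw [← map_sub, e1, e2, map_sum]
      apply Finset.sum_congr rfl
      intro k _
      rw [RCLike.re_ofReal_mul]
    have hbound : ∑ k ∈ Finset.Ico (n₀+1) (K+1),
        wgt k * RCLike.re (gf (Omp G d k (fun _ => xs))) ≤ wgt n₀ * (d/4) := by
      calc ∑ k ∈ Finset.Ico (n₀+1) (K+1),
            wgt k * RCLike.re (gf (Omp G d k (fun _ => xs)))
          ≤ ∑ k ∈ Finset.Ico (n₀+1) (K+1), wgt k * (d/4) := by
            apply Finset.sum_le_sum
            intro k hk
            have hk' : n₀ + 1 ≤ k := (Finset.mem_Ico.1 hk).1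
            exact mul_le_mul_of_nonneg_left (hβ k hk') (le_of_lt (wgt_pos k))
      _ = (∑ k ∈ Finset.Ico (n₀+1) (K+1), wgt k) * (d/4) := by rw [Finset.sum_mul]
      _ ≤ (2 * wgt (n₀+1)) * (d/4) := by
            apply mul_le_mul_of_nonneg_right (sum_wgt_le _ _) (by linarith)
      _ = wgt n₀ * (d/4) := by rw [wgt_succ]; ring
    linarith
  -- pass to the limit
  have haK : Tendsto (fun K => RCLike.re (gf (Vp G d K (fun _ => xs)))) atTop
      (𝓝 (RCLike.re (gf v))) := by
    have h1 : Tendsto (fun K => Vp G d K (fun _ => xs)) atTop (𝓝 v) :=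
      ((continuous_eval_const (fun _ => xs)).tendsto Ω).comp hVtend
    have h2 : Tendsto (fun K => gf (Vp G d K (fun _ => xs))) atTop (𝓝 (gf v)) :=
      (gf.continuous.tendsto v).comp h1
    exact (RCLike.continuous_re.tendsto (gf v)).comp h2
  have hgv : RCLike.re (gf v) = polyNorm Ω := by
    rw [hgfv, RCLike.ofReal_re, hvn]
  have hfinal1 : polyNorm Ω ≤ RCLike.re (gf (Vp G d n₀ (fun _ => xs))) + wgt n₀ * (d/4) := by
    rw [← hgv]
    exact le_of_tendsto haK (eventually_atTop.2 ⟨n₀, hpartial⟩)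
  have hfinal2 : RCLike.re (gf (Vp G d n₀ (fun _ => xs))) ≤ polyNorm (Vp G d n₀) := by
    calc RCLike.re (gf (Vp G d n₀ (fun _ => xs)))
        ≤ ‖gf (Vp G d n₀ (fun _ => xs))‖ := RCLike.re_le_norm _
    _ ≤ ‖gf‖ * ‖Vp G d n₀ (fun _ => xs)‖ := gf.le_opNorm _
    _ = ‖Vp G d n₀ (fun _ => xs)‖ := by rw [hgf1, one_mul]
    _ ≤ polyNorm (Vp G d n₀) := le_polyNorm _ hxs1
  have hfinal3 := pV_inv G hd0 n₀
  have hfinal4 : ddq G d n₀ ≤ polyNorm Ω := hddle n₀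
  have hw := wgt_pos n₀
  have hwle := wgt_le_one n₀
  have h5 : (1 - wgt n₀) * ddq G d n₀ ≤ (1 - wgt n₀) * polyNorm Ω :=
    mul_le_mul_of_nonneg_left hfinal4 (by linarith)
  nlinarith [mul_pos hw hd0, mul_le_mul_of_nonneg_left hδd (le_of_lt hw)]
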